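/- In the semigroup $S=\mathscr{S}_n\ltimes(\mathbb{N}\times\mathbb{N})^n$ with operation $(\alpha,[\mathbf{x},\mathbf{y}])\cdot(\beta,[\mathbf{u},\mathbf{v}]) = (\alpha\circ\beta,\ [(\mathbf{x})\beta+\max\{(\mathbf{y})\beta,\mathbf{u}\}-(\mathbf{y})\beta,\ \mathbf{v}+\max\{(\mathbf{y})\beta,\mathbf{u}\}-\mathbf{u}])$, for all fixed elements $s,t\in S$ the sets $\{x\in S : s\cdot x = t\}$ and $\{x\in S : x\cdot s = t\}$ are finite. -/

import Mathlib

/-- Elements of the semigroup `S = 𝒮ₙ ⋉ (ℕ × ℕ)ⁿ`: a permutation of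
`{1,…,n}` together with a pair of tuples of positive integers. -/
abbrev Gel (n : ℕ) := Equiv.Perm (Fin n) × (Fin n → ℕ+) × (Fin n → ℕ+)

/-- The right action of a permutation on tuples: `((x)σ)_i = x_{σ⁻¹(i)}`. -/
def ract {n : ℕ} (σ : Equiv.Perm (Fin n)) (x : Fin n → ℕ+) : Fin n → ℕ+ :=
  fun i => x (σ.symm i)

/-- The semidirect product operation
`(α,[x,y])·(β,[u,v]) = (α∘β, [(x)β + max{(y)β,u} - (y)β, v + max{(y)β,u} - u])`,
where `α∘β` is the composition of the permutations acting on the right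
(first `α`, then `β`) and max and subtraction are coordinatewise. -/
def gmul {n : ℕ} (a b : Gel n) : Gel n :=
  (b.1 * a.1,
   fun i => ract b.1 a.2.1 i + max (ract b.1 a.2.2 i) (b.2.1 i) - ract b.1 a.2.2 i,
   fun i => b.2.2 i + max (ract b.1 a.2.2 i) (b.2.1 i) - b.2.1 i)

/-- In the semigroup `S = 𝒮ₙ ⋉ (ℕ × ℕ)ⁿ`, every first-order equation
`s·x = t` or `x·s = t` has only finitely many solutions. -/
lemma pnat_coe_addsub (a b c : ℕ+) (h : c ≤ b) :
    ((a + b - c : ℕ+) : ℕ) = (a : ℕ) + (b : ℕ) - (c : ℕ) := by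
  have ha := a.pos
  have hc : c < a + b := by
    have : (c : ℕ) < (a : ℕ) + (b : ℕ) := by
      have := (PNat.coe_le_coe _ _).mpr h; omega
    exact_mod_cast this
  rw [PNat.sub_coe, if_pos hc, PNat.add_coe]

lemma pnat_iic_finite (B : ℕ+) : (Set.Iic B).Finite := by
  have h : Set.Iic B = (fun a : ℕ+ => (a : ℕ)) ⁻¹' (Set.Iic (B : ℕ)) := by
    ext a; simp
  rw [h]
  exact Set.Finite.preimage (fun a _ b _ hab => PNat.coe_injective hab) (Set.finite_Iic _)

lemma finite_bdd {n : ℕ} (B : ℕ+) :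
    {x : Gel n | (∀ i, x.2.1 i ≤ B) ∧ ∀ i, x.2.2 i ≤ B}.Finite := by
  apply Set.Finite.subset (Set.Finite.prod Set.finite_univ
    (Set.Finite.prod (Set.Finite.pi fun _ : Fin n => pnat_iic_finite B)
      (Set.Finite.pi fun _ : Fin n => pnat_iic_finite B)))
  intro x hx
  refine ⟨Set.mem_univ _, ?_, ?_⟩ <;> intro i _
  · exact hx.1 i
  · exact hx.2 i

theorem gel_equations_finite {n : ℕ} (s t : Gel n) :
    {x : Gel n | gmul s x = t}.Finite ∧ {x : Gel n | gmul x s = t}.Finite := by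
  set N : ℕ := ∑ j : Fin n, ((s.2.1 j : ℕ) + s.2.2 j + t.2.1 j + t.2.2 j) with hNdef
  have hN : ∀ j, (s.2.1 j : ℕ) ≤ N ∧ (s.2.2 j : ℕ) ≤ N ∧ (t.2.1 j : ℕ) ≤ N ∧ (t.2.2 j : ℕ) ≤ N := by
    intro j
    have := Finset.single_le_sum
      (f := fun j => ((s.2.1 j : ℕ) + s.2.2 j + t.2.1 j + t.2.2 j))
      (fun i _ => Nat.zero_le _) (Finset.mem_univ j)
    omega
  set B : ℕ+ := ⟨2 * N + 1, by omega⟩ with hBdef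
  have hB : (B : ℕ) = 2 * N + 1 := rfl
  constructor
  · apply (finite_bdd B).subset
    intro x hx
    simp only [Set.mem_setOf_eq, gmul, Prod.ext_iff, funext_iff] at hx
    obtain ⟨-, h1, h2⟩ := hx
    constructor
    · intro i
      have e1 := congrArg (fun a : ℕ+ => (a : ℕ)) (h1 i)
      rw [pnat_coe_addsub _ _ _ (le_max_left _ _)] at e1
      have hm : (x.2.1 i : ℕ) ≤ ((max (ract x.1 s.2.2 i) (x.2.1 i) : ℕ+) : ℕ) :=
        (PNat.coe_le_coe _ _).mpr (le_max_right _ _)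
      have hY : (ract x.1 s.2.2 i : ℕ) ≤ ((max (ract x.1 s.2.2 i) (x.2.1 i) : ℕ+) : ℕ) :=
        (PNat.coe_le_coe _ _).mpr (le_max_left _ _)
      have hX := (ract x.1 s.2.1 i).pos
      have hYN : (ract x.1 s.2.2 i : ℕ) ≤ N := (hN (x.1.symm i)).2.1
      have htN : (t.2.1 i : ℕ) ≤ N := (hN i).2.2.1
      have : (x.2.1 i : ℕ) ≤ (B : ℕ) := by rw [hB]; omega
      exact_mod_cast this
    · intro i
      have e2 := congrArg (fun a : ℕ+ => (a : ℕ)) (h2 i)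
      rw [pnat_coe_addsub _ _ _ (le_max_right _ _)] at e2
      have hm : (x.2.1 i : ℕ) ≤ ((max (ract x.1 s.2.2 i) (x.2.1 i) : ℕ+) : ℕ) :=
        (PNat.coe_le_coe _ _).mpr (le_max_right _ _)
      have htN : (t.2.2 i : ℕ) ≤ N := (hN i).2.2.2
      have : (x.2.2 i : ℕ) ≤ (B : ℕ) := by rw [hB]; omega
      exact_mod_cast this
  · apply (finite_bdd B).subset
    intro x hx
    simp only [Set.mem_setOf_eq, gmul, Prod.ext_iff, funext_iff] at hx
    obtain ⟨-, h1, h2⟩ := hx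
    constructor
    · intro j
      have e1 := congrArg (fun a : ℕ+ => (a : ℕ)) (h1 (s.1 j))
      rw [pnat_coe_addsub _ _ _ (le_max_left _ _)] at e1
      have hY : (ract s.1 x.2.2 (s.1 j) : ℕ) ≤
          ((max (ract s.1 x.2.2 (s.1 j)) (s.2.1 (s.1 j)) : ℕ+) : ℕ) :=
        (PNat.coe_le_coe _ _).mpr (le_max_left _ _)
      have hrj : ract s.1 x.2.1 (s.1 j) = x.2.1 j := by
        simp [ract]
      rw [hrj] at e1
      have htN : (t.2.1 (s.1 j) : ℕ) ≤ N := (hN (s.1 j)).2.2.1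
      have : (x.2.1 j : ℕ) ≤ (B : ℕ) := by rw [hB]; omega
      exact_mod_cast this
    · intro j
      have e2 := congrArg (fun a : ℕ+ => (a : ℕ)) (h2 (s.1 j))
      rw [pnat_coe_addsub _ _ _ (le_max_right _ _)] at e2
      have hY : (ract s.1 x.2.2 (s.1 j) : ℕ) ≤
          ((max (ract s.1 x.2.2 (s.1 j)) (s.2.1 (s.1 j)) : ℕ+) : ℕ) :=
        (PNat.coe_le_coe _ _).mpr (le_max_left _ _)
      have hrj : (ract s.1 x.2.2 (s.1 j) : ℕ) = (x.2.2 j : ℕ) := by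
        simp [ract]
      have hm : (s.2.1 (s.1 j) : ℕ) ≤
          ((max (ract s.1 x.2.2 (s.1 j)) (s.2.1 (s.1 j)) : ℕ+) : ℕ) :=
        (PNat.coe_le_coe _ _).mpr (le_max_right _ _)
      have htN : (t.2.2 (s.1 j) : ℕ) ≤ N := (hN (s.1 j)).2.2.2
      have hsN : (s.2.1 (s.1 j) : ℕ) ≤ N := (hN (s.1 j)).1
      have hs2 := (s.2.2 (s.1 j)).pos
      have : (x.2.2 j : ℕ) ≤ (B : ℕ) := by rw [hB]; omega
      exact_mod_cast this
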